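/- Let T be a linear map from n×n real symmetric matrices to m×m real symmetric matrices that maps positive semidefinite matrices to positive semidefinite matrices and positive definite matrices to positive definite matrices. Then for every n×n positive definite matrix P and every n×n symmetric matrix Q, the matrix T(√P·Q²·√P) − T(√P·Q·√P) · (T(P))⁻¹ · T(√P·Q·√P) is positive semidefinite. -/

import Mathlib

open Matrix

open scoped ComplexOrder in
/-- The square root of a positive semidefinite matrix, as `Matrix.PosSemidef.sqrt` was
defined in the older Mathlib (removed since). -/
noncomputable def Matrix.PosSemidef.sqrt {n : Type*} [Fintype n] [DecidableEq n]
    {𝕜 : Type*} [RCLike 𝕜] {A : Matrix n n 𝕜} (hA : A.PosSemidef) : Matrix n n 𝕜 :=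
  (hA.1.eigenvectorUnitary : Matrix n n 𝕜) *
    diagonal ((fun r : ℝ => (r : 𝕜)) ∘ (√·) ∘ hA.1.eigenvalues) *
    (star hA.1.eigenvectorUnitary : Matrix n n 𝕜)

/-- for a linear map `T` between spaces of symmetric matrices mapping
PSD matrices to PSD matrices and PD matrices to PD matrices, and for `P` positive
definite and `Q` symmetric,
`T(√P·Q²·√P) − T(√P·Q·√P)·(T P)⁻¹·T(√P·Q·√P)` is positive semidefinite. -/
theorem schur_complement_key_step (n m : ℕ)
    (T : Matrix (Fin n) (Fin n) ℝ →ₗ[ℝ] Matrix (Fin m) (Fin m) ℝ)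
    (hTsymm : ∀ X : Matrix (Fin n) (Fin n) ℝ, X.IsSymm → (T X).IsSymm)
    (hTpsd : ∀ X : Matrix (Fin n) (Fin n) ℝ, X.PosSemidef → (T X).PosSemidef)
    (hTpd : ∀ X : Matrix (Fin n) (Fin n) ℝ, X.PosDef → (T X).PosDef)
    (P Q : Matrix (Fin n) (Fin n) ℝ) (hP : P.PosDef) (hQ : Q.IsSymm) :
    (T (PosSemidef.sqrt hP.posSemidef * (Q * Q) * PosSemidef.sqrt hP.posSemidef)
      - T (PosSemidef.sqrt hP.posSemidef * Q * PosSemidef.sqrt hP.posSemidef) * (T P)⁻¹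
          * T (PosSemidef.sqrt hP.posSemidef * Q * PosSemidef.sqrt hP.posSemidef)).PosSemidef := by
  classical
  set S : Matrix (Fin n) (Fin n) ℝ := PosSemidef.sqrt hP.posSemidef with hSdef
  have hS : S.PosSemidef := by
    have hd : (diagonal ((fun r : ℝ => (r : ℝ)) ∘ (√·) ∘ hP.posSemidef.1.eigenvalues)).PosSemidef :=
      PosSemidef.diagonal (fun i => Real.sqrt_nonneg _)
    have h2 := hd.mul_mul_conjTranspose_same (hP.posSemidef.1.eigenvectorUnitary : Matrix (Fin n) (Fin n) ℝ)
    rw [← Matrix.star_eq_conjTranspose] at h2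
    exact h2
  have hSH : S.IsHermitian := hS.isHermitian
  have hST : Sᵀ = S := by rw [← conjTranspose_eq_transpose_of_trivial]; exact hSH
  have hSS : S * S = P := by
    have hVV : star (hP.posSemidef.1.eigenvectorUnitary : Matrix (Fin n) (Fin n) ℝ)
        * (hP.posSemidef.1.eigenvectorUnitary : Matrix (Fin n) (Fin n) ℝ) = 1 :=
      (Matrix.mem_unitaryGroup_iff').mp hP.posSemidef.1.eigenvectorUnitary.2
    have hPs : P = (hP.posSemidef.1.eigenvectorUnitary : Matrix (Fin n) (Fin n) ℝ)
        * diagonal hP.posSemidef.1.eigenvalues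
        * star (hP.posSemidef.1.eigenvectorUnitary : Matrix (Fin n) (Fin n) ℝ) := by
      simpa [RCLike.ofReal_real_eq_id] using hP.posSemidef.1.spectral_theorem
    have hDD : diagonal ((fun r : ℝ => (r : ℝ)) ∘ (√·) ∘ hP.posSemidef.1.eigenvalues)
        * diagonal ((fun r : ℝ => (r : ℝ)) ∘ (√·) ∘ hP.posSemidef.1.eigenvalues)
        = diagonal hP.posSemidef.1.eigenvalues := by
      rw [diagonal_mul_diagonal]
      congr 1
      funext i
      exact Real.mul_self_sqrt (hP.posSemidef.eigenvalues_nonneg i)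
    rw [hSdef, Matrix.PosSemidef.sqrt]
    conv_rhs => rw [hPs]
    simp only [Matrix.mul_assoc]
    rw [← Matrix.mul_assoc (star _) (hP.posSemidef.1.eigenvectorUnitary : Matrix (Fin n) (Fin n) ℝ),
      hVV, Matrix.one_mul, ← Matrix.mul_assoc (diagonal _) (diagonal _)]
    exact congrArg _ (congrArg (· * _) hDD)
  have hQH : Q.IsHermitian := by
    rw [IsHermitian, conjTranspose_eq_transpose_of_trivial]; exact hQ
  set U : Matrix (Fin n) (Fin n) ℝ := (hQH.eigenvectorUnitary : Matrix (Fin n) (Fin n) ℝ)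
    with hUdef
  set ev : Fin n → ℝ := hQH.eigenvalues with hevdef
  have hUU : star U * U = 1 := (Matrix.mem_unitaryGroup_iff').mp hQH.eigenvectorUnitary.2
  have hUU' : U * star U = 1 := (Matrix.mem_unitaryGroup_iff).mp hQH.eigenvectorUnitary.2
  have hspec : Q = U * diagonal ev * star U := by
    simpa [RCLike.ofReal_real_eq_id] using hQH.spectral_theorem
  set N : Fin n → Matrix (Fin n) (Fin n) ℝ :=
    fun i => S * (U * diagonal (Pi.single i 1) * star U) * S with hNdef
  have hNpsd : ∀ i, (N i).PosSemidef := by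
    intro i
    have h1 : (diagonal (Pi.single i 1) : Matrix (Fin n) (Fin n) ℝ).PosSemidef :=
      posSemidef_diagonal_iff.mpr (fun j => by
        by_cases h : j = i <;> simp [Pi.single_apply, h])
    have h2 := h1.mul_mul_conjTranspose_same U
    rw [← Matrix.star_eq_conjTranspose] at h2
    have h3 := h2.mul_mul_conjTranspose_same S
    rw [hSH.eq] at h3
    exact h3
  have hMpsd : ∀ i, (T (N i)).PosSemidef := fun i => hTpsd _ (hNpsd i)
  have hdiag : ∀ f : Fin n → ℝ,
      (diagonal f : Matrix (Fin n) (Fin n) ℝ)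
        = ∑ i, f i • diagonal (Pi.single i 1) := by
    intro f
    ext j k
    rw [Matrix.sum_apply]
    by_cases h : j = k
    · subst h
      simp [diagonal_apply, Pi.single_apply]
    · simp [diagonal_apply_ne _ h]
  have key : ∀ f : Fin n → ℝ,
      T (S * (U * diagonal f * star U) * S) = ∑ i, f i • T (N i) := by
    intro f
    rw [hdiag f]
    simp only [Finset.mul_sum, Finset.sum_mul, Matrix.mul_smul, Matrix.smul_mul,
      map_sum, _root_.map_smul, hNdef]
  have hA : T (S * (Q * Q) * S) = ∑ i, (ev i * ev i) • T (N i) := by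
    have hdd : diagonal ev * diagonal ev
        = (diagonal (fun i => ev i * ev i) : Matrix (Fin n) (Fin n) ℝ) := by
      rw [diagonal_mul_diagonal]
    have hQQ : Q * Q = U * diagonal (fun i => ev i * ev i) * star U := by
      calc Q * Q = (U * diagonal ev * star U) * (U * diagonal ev * star U) := by
            rw [← hspec]
        _ = U * (diagonal ev * ((star U * U) * (diagonal ev * star U))) := by
            simp only [Matrix.mul_assoc]
        _ = U * (diagonal ev * (diagonal ev * star U)) := by
            rw [hUU, Matrix.one_mul]
        _ = U * ((diagonal ev * diagonal ev) * star U) := by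
            rw [Matrix.mul_assoc]
        _ = U * (diagonal (fun i => ev i * ev i) * star U) := by rw [hdd]
        _ = U * diagonal (fun i => ev i * ev i) * star U := by rw [Matrix.mul_assoc]
    rw [hQQ, key]
  have hB : T (S * Q * S) = ∑ i, ev i • T (N i) := by
    rw [show S * Q * S = S * (U * diagonal ev * star U) * S by rw [← hspec]]
    exact key ev
  have hC : T P = ∑ i, T (N i) := by
    have hP1 : P = S * (U * diagonal (fun _ : Fin n => (1:ℝ)) * star U) * S := by
      rw [diagonal_one, Matrix.mul_one, hUU', Matrix.mul_one, hSS]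
    rw [hP1, key]
    simp
  set A : Matrix (Fin m) (Fin m) ℝ := T (S * (Q * Q) * S) with hAdef
  set B : Matrix (Fin m) (Fin m) ℝ := T (S * Q * S) with hBdef
  set C : Matrix (Fin m) (Fin m) ℝ := T P with hCdef
  have hCpd : C.PosDef := hTpd P hP
  have hCinv : C * C⁻¹ = 1 := Matrix.mul_nonsing_inv C (isUnit_iff_ne_zero.mpr hCpd.det_pos.ne')
  have hBsymm : (S * Q * S).IsSymm := by
    show (S * Q * S)ᵀ = S * Q * S
    rw [transpose_mul, transpose_mul, hST, hQ.eq, Matrix.mul_assoc]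
  have hBH : B.IsHermitian := by
    rw [IsHermitian, conjTranspose_eq_transpose_of_trivial]
    exact hTsymm _ hBsymm
  have hAsymm : (S * (Q * Q) * S).IsSymm := by
    show (S * (Q * Q) * S)ᵀ = S * (Q * Q) * S
    rw [transpose_mul, transpose_mul, transpose_mul, hST, hQ.eq]
    simp only [Matrix.mul_assoc]
  have hAH : A.IsHermitian := by
    rw [IsHermitian, conjTranspose_eq_transpose_of_trivial]
    exact hTsymm _ hAsymm
  have hCinvH : (C⁻¹).IsHermitian := hCpd.isHermitian.inv
  rw [posSemidef_iff_dotProduct_mulVec]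
  constructor
  · have hBCB : (B * C⁻¹ * B).IsHermitian := by
      rw [IsHermitian, conjTranspose_mul, conjTranspose_mul, hBH.eq, hCinvH.eq,
        Matrix.mul_assoc]
    exact hAH.sub hBCB
  · intro x
    set b : Fin m → ℝ := B *ᵥ x with hbdef
    set y : Fin m → ℝ := C⁻¹ *ᵥ b with hydef
    have hCy : C *ᵥ y = b := by
      rw [hydef, mulVec_mulVec, hCinv, one_mulVec]
    have hBCBx : (B * C⁻¹ * B) *ᵥ x = B *ᵥ y := by
      rw [hydef, hbdef, mulVec_mulVec, mulVec_mulVec]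
    have hdot : ∀ (g : Fin n → (Fin m → ℝ)) (v : Fin m → ℝ),
        v ⬝ᵥ (∑ i, g i) = ∑ i, v ⬝ᵥ g i := by
      intro g v
      simp only [dotProduct, Finset.sum_apply, Finset.mul_sum]
      exact Finset.sum_comm
    have hsum : ∀ (v w : Fin m → ℝ) (f : Fin n → ℝ),
        v ⬝ᵥ ((∑ i, f i • T (N i)) *ᵥ w) = ∑ i, f i * (v ⬝ᵥ (T (N i) *ᵥ w)) := by
      intro v w f
      rw [show (∑ i, f i • T (N i)) *ᵥ w = ∑ i, (f i • T (N i)) *ᵥ w from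
        map_sum (mulVec.addMonoidHomLeft w) _ _, hdot]
      refine Finset.sum_congr rfl fun i _ => ?_
      rw [smul_mulVec, dotProduct_smul, smul_eq_mul]
    have hAx : x ⬝ᵥ (A *ᵥ x) = ∑ i, (ev i * ev i) * (x ⬝ᵥ (T (N i) *ᵥ x)) := by
      rw [hA]; exact hsum x x _
    have hBy : x ⬝ᵥ (B *ᵥ y) = ∑ i, ev i * (x ⬝ᵥ (T (N i) *ᵥ y)) := by
      rw [hB]; exact hsum x y _
    have hBx : y ⬝ᵥ (B *ᵥ x) = ∑ i, ev i * (y ⬝ᵥ (T (N i) *ᵥ x)) := by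
      rw [hB]; exact hsum y x _
    have hCyy : y ⬝ᵥ (C *ᵥ y) = ∑ i, y ⬝ᵥ (T (N i) *ᵥ y) := by
      have h := hsum y y (fun _ => 1)
      simpa [hC] using h
    have hterm : ∀ i, (ev i • x - y) ⬝ᵥ (T (N i) *ᵥ (ev i • x - y))
        = (ev i * ev i) * (x ⬝ᵥ (T (N i) *ᵥ x)) - ev i * (x ⬝ᵥ (T (N i) *ᵥ y))
          - ev i * (y ⬝ᵥ (T (N i) *ᵥ x)) + y ⬝ᵥ (T (N i) *ᵥ y) := by
      intro i
      simp only [sub_dotProduct, dotProduct_sub, mulVec_sub, mulVec_smul,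
        smul_dotProduct, dotProduct_smul, smul_eq_mul]
      ring
    have hkey : x ⬝ᵥ (A *ᵥ x) - x ⬝ᵥ (B *ᵥ y)
        = ∑ i, (ev i • x - y) ⬝ᵥ (T (N i) *ᵥ (ev i • x - y)) := by
      have hyb : y ⬝ᵥ (C *ᵥ y) = y ⬝ᵥ (B *ᵥ x) := by rw [hCy, hbdef]
      calc x ⬝ᵥ (A *ᵥ x) - x ⬝ᵥ (B *ᵥ y)
          = x ⬝ᵥ (A *ᵥ x) - x ⬝ᵥ (B *ᵥ y) - y ⬝ᵥ (B *ᵥ x) + y ⬝ᵥ (C *ᵥ y) := by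
            rw [hyb]; ring
        _ = ∑ i, ((ev i * ev i) * (x ⬝ᵥ (T (N i) *ᵥ x)) - ev i * (x ⬝ᵥ (T (N i) *ᵥ y))
              - ev i * (y ⬝ᵥ (T (N i) *ᵥ x)) + y ⬝ᵥ (T (N i) *ᵥ y)) := by
            rw [hAx, hBy, hBx, hCyy, Finset.sum_add_distrib, Finset.sum_sub_distrib,
              Finset.sum_sub_distrib]
        _ = _ := Finset.sum_congr rfl (fun i _ => (hterm i).symm)
    have hgoal : star x ⬝ᵥ ((A - B * C⁻¹ * B) *ᵥ x)
        = x ⬝ᵥ (A *ᵥ x) - x ⬝ᵥ (B *ᵥ y) := by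
      rw [star_trivial, sub_mulVec, dotProduct_sub, hBCBx]
    rw [hgoal, hkey]
    refine Finset.sum_nonneg fun i _ => ?_
    have h := (hMpsd i).dotProduct_mulVec_nonneg (ev i • x - y)
    simpa using h
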